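/- (Proposition 2.9(i).) Let 𝕂 be a field, r and s nonzero in 𝕂 with rs⁻¹ not a root of unity, and let φ, φ′ be nonzero elements of 𝕂. The Verma module M(φ, φ′) is a simple U_{r,s}(sl_2)-module if and only if φ·r^{−j} − φ′·s^{−j} ≠ 0 for every integer j ≥ 0. -/

import Mathlib

/-- Generators of `U_{r,s}(sl_2)`: `e`, `f`, `ω`, `ω⁻¹`, `ω′`, `ω′⁻¹`. -/
inductive UGen : Type
  | e | f | w | winv | w' | w'inv

open FreeAlgebra in
/-- The defining relations of `U_{r,s}(sl_2)`. -/
inductive URel (𝕂 : Type) [Field 𝕂] (r s : 𝕂) :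
    FreeAlgebra 𝕂 UGen → FreeAlgebra 𝕂 UGen → Prop
  | winv_right : URel 𝕂 r s (ι 𝕂 .w * ι 𝕂 .winv) 1
  | winv_left : URel 𝕂 r s (ι 𝕂 .winv * ι 𝕂 .w) 1
  | w'inv_right : URel 𝕂 r s (ι 𝕂 .w' * ι 𝕂 .w'inv) 1
  | w'inv_left : URel 𝕂 r s (ι 𝕂 .w'inv * ι 𝕂 .w') 1
  | ww' : URel 𝕂 r s (ι 𝕂 .w * ι 𝕂 .w') (ι 𝕂 .w' * ι 𝕂 .w)
  | we : URel 𝕂 r s (ι 𝕂 .w * ι 𝕂 .e) ((r * s⁻¹) • (ι 𝕂 .e * ι 𝕂 .w))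
  | wf : URel 𝕂 r s (ι 𝕂 .w * ι 𝕂 .f) ((r⁻¹ * s) • (ι 𝕂 .f * ι 𝕂 .w))
  | w'e : URel 𝕂 r s (ι 𝕂 .w' * ι 𝕂 .e) ((r⁻¹ * s) • (ι 𝕂 .e * ι 𝕂 .w'))
  | w'f : URel 𝕂 r s (ι 𝕂 .w' * ι 𝕂 .f) ((r * s⁻¹) • (ι 𝕂 .f * ι 𝕂 .w'))
  | ef : URel 𝕂 r s (ι 𝕂 .e * ι 𝕂 .f - ι 𝕂 .f * ι 𝕂 .e)
      ((r - s)⁻¹ • (ι 𝕂 .w - ι 𝕂 .w'))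

/-- The two-parameter quantum group `U_{r,s}(sl_2)`: the quotient of the free
algebra on the six generators by the defining relations. -/
abbrev Ursl2 (𝕂 : Type) [Field 𝕂] (r s : 𝕂) : Type := RingQuot (URel 𝕂 r s)

/-- The image of a generator in `U_{r,s}(sl_2)`. -/
def UGen.toU {𝕂 : Type} [Field 𝕂] (r s : 𝕂) (x : UGen) : Ursl2 𝕂 r s :=
  RingQuot.mkAlgHom 𝕂 (URel 𝕂 r s) (FreeAlgebra.ι 𝕂 x)

/-- The quantum integer `[m] = (rᵐ − sᵐ)/(r − s)`. -/
def qInt {𝕂 : Type} [Field 𝕂] (r s : 𝕂) (m : ℕ) : 𝕂 := (r ^ m - s ^ m) / (r - s)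

/-- Proposition 2.9(i): the Verma module `M(φ, φ′)` — here given by any `𝕂`-vector
space `M` with basis `(v_j)_{j ∈ ℕ}` and a representation `ρ` of `U_{r,s}(sl_2)`
with `ω.v_j = φ(rs⁻¹)⁻ʲ v_j`, `ω′.v_j = φ′(rs⁻¹)ʲ v_j`, `f.v_j = [j+1] v_{j+1}`,
`e.v_j = ((r^{1−j}φ − s^{1−j}φ′)/(r − s)) v_{j−1}` (`v_{−1} = 0`) — is a simple
`U_{r,s}(sl_2)`-module if and only if `φ r^{−j} − φ′ s^{−j} ≠ 0` for every `j ≥ 0`. -/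
lemma diag_repr_aux {𝕂 M : Type} [Field 𝕂] [AddCommGroup M] [Module 𝕂 M]
    (v : Module.Basis ℕ 𝕂 M) (T : Module.End 𝕂 M) (d : ℕ → 𝕂)
    (hT : ∀ i, T (v i) = d i • v i) (x : M) (i : ℕ) :
    v.repr (T x) i = d i * v.repr x i := by
  conv_lhs => rw [← v.linearCombination_repr x, Finsupp.linearCombination_apply, Finsupp.sum]
  rw [map_sum, map_sum, Finset.sum_apply']
  simp only [map_smul, hT, smul_smul, Module.Basis.repr_self, Finsupp.smul_single, smul_eq_mul,
    mul_one, Finsupp.single_apply]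
  rw [Finset.sum_ite_eq' (v.repr x).support i (fun j => v.repr x j * d j)]
  by_cases h : i ∈ (v.repr x).support
  · simp [h, mul_comm]
  · simp [h, Finsupp.notMem_support_iff.mp h]

lemma ursl2_act_mem {𝕂 : Type} [Field 𝕂] {r s : 𝕂} {M : Type} [AddCommGroup M] [Module 𝕂 M]
    (ρ : Ursl2 𝕂 r s →ₐ[𝕂] Module.End 𝕂 M) (P : Submodule 𝕂 M)
    (hgen : ∀ g : UGen, ∀ m ∈ P, ρ (UGen.toU r s g) m ∈ P) :
    ∀ a : Ursl2 𝕂 r s, ∀ m ∈ P, ρ a m ∈ P := by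
  intro a
  obtain ⟨b, rfl⟩ := RingQuot.mkAlgHom_surjective 𝕂 (URel 𝕂 r s) a
  induction b using FreeAlgebra.induction with
  | grade0 c =>
      intro m hm
      rw [AlgHom.commutes, AlgHom.commutes, Module.algebraMap_end_apply]
      exact P.smul_mem c hm
  | grade1 g => exact hgen g
  | mul a b ha hb =>
      intro m hm
      rw [map_mul, map_mul, Module.End.mul_apply]
      exact ha _ (hb m hm)
  | add a b ha hb =>
      intro m hm
      rw [map_add, map_add, LinearMap.add_apply]
      exact P.add_mem (ha m hm) (hb m hm)

theorem stmt10 {𝕂 : Type} [Field 𝕂] (r s : 𝕂) (hr : r ≠ 0) (hs : s ≠ 0)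
    (hroot : ∀ k : ℤ, (r * s⁻¹) ^ k = 1 → k = 0)
    (φ φ' : 𝕂) (hφ : φ ≠ 0) (hφ' : φ' ≠ 0)
    (M : Type) [AddCommGroup M] [Module 𝕂 M] (v : Module.Basis ℕ 𝕂 M)
    (ρ : Ursl2 𝕂 r s →ₐ[𝕂] Module.End 𝕂 M)
    (hw : ∀ j : ℕ, ρ (UGen.toU r s .w) (v j) = (φ * (r * s⁻¹) ^ (-(j : ℤ))) • v j)
    (hw' : ∀ j : ℕ, ρ (UGen.toU r s .w') (v j) = (φ' * (r * s⁻¹) ^ (j : ℤ)) • v j)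
    (hf : ∀ j : ℕ, ρ (UGen.toU r s .f) (v j) = qInt r s (j + 1) • v (j + 1))
    (he0 : ρ (UGen.toU r s .e) (v 0) = 0)
    (he : ∀ j : ℕ, ρ (UGen.toU r s .e) (v (j + 1)) =
      ((r ^ (-(j : ℤ)) * φ - s ^ (-(j : ℤ)) * φ') / (r - s)) • v j) :
    (letI : Module (Ursl2 𝕂 r s) M := Module.compHom M ρ.toRingHom
     IsSimpleModule (Ursl2 𝕂 r s) M) ↔
      ∀ j : ℕ, φ * r ^ (-(j : ℤ)) - φ' * s ^ (-(j : ℤ)) ≠ 0 := by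
  
  letI inst : Module (Ursl2 𝕂 r s) M := Module.compHom M ρ.toRingHom
  show IsSimpleModule (Ursl2 𝕂 r s) M ↔ _
  -- basic nonvanishing facts
  have hrs : r * s⁻¹ ≠ 0 := mul_ne_zero hr (inv_ne_zero hs)
  have hrsn : r ≠ s := by
    intro h
    have h1 : (r * s⁻¹ : 𝕂) ^ (1 : ℤ) = 1 := by
      rw [zpow_one, h, mul_inv_cancel₀ hs]
    exact one_ne_zero (hroot 1 h1)
  have hrssub : r - s ≠ 0 := sub_ne_zero.mpr hrsn
  have hpow : ∀ m : ℕ, 0 < m → r ^ m ≠ s ^ m := by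
    intro m hm h
    have h1 : (r * s⁻¹) ^ (m : ℤ) = 1 := by
      rw [zpow_natCast, mul_pow, inv_pow, h, mul_inv_cancel₀ (pow_ne_zero m hs)]
    have h2 := hroot _ h1
    have : m = 0 := by exact_mod_cast h2
    omega
  have hq : ∀ m : ℕ, qInt r s (m + 1) ≠ 0 := fun m =>
    div_ne_zero (sub_ne_zero.mpr (hpow (m + 1) (Nat.succ_pos m))) hrssub
  have hlam : ∀ j : ℕ, φ * (r * s⁻¹) ^ (-(j : ℤ)) ≠ 0 := fun j =>
    mul_ne_zero hφ (zpow_ne_zero _ hrs)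
  have hlam' : ∀ j : ℕ, φ' * (r * s⁻¹) ^ ((j : ℤ)) ≠ 0 := fun j =>
    mul_ne_zero hφ' (zpow_ne_zero _ hrs)
  have hlaminj : ∀ j k : ℕ,
      φ * (r * s⁻¹) ^ (-(j : ℤ)) = φ * (r * s⁻¹) ^ (-(k : ℤ)) → j = k := by
    intro j k h
    have h2 : (r * s⁻¹) ^ (-(j : ℤ)) = (r * s⁻¹) ^ (-(k : ℤ)) := mul_left_cancel₀ hφ h
    have h3 : (r * s⁻¹) ^ ((k : ℤ) + -(j : ℤ)) = 1 := by
      rw [zpow_add₀ hrs, h2, ← zpow_add₀ hrs, add_neg_cancel, zpow_zero]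
    have h4 := hroot _ h3
    omega
  -- smul unfolding
  have hsmul : ∀ (a : Ursl2 𝕂 r s) (m : M), a • m = ρ a m := fun _ _ => rfl
  have hKmem : ∀ (N : Submodule (Ursl2 𝕂 r s) M) (c : 𝕂) (m : M), m ∈ N → c • m ∈ N := by
    intro N c m hm
    have h1 : c • m = (algebraMap 𝕂 (Ursl2 𝕂 r s) c) • m := by
      rw [hsmul, AlgHom.commutes, Module.algebraMap_end_apply]
    rw [h1]
    exact N.smul_mem _ hm
  -- inverse generators act diagonally
  have hrelmul : ∀ g g' : UGen, URel 𝕂 r s (FreeAlgebra.ι 𝕂 g * FreeAlgebra.ι 𝕂 g') 1 →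
      ρ (UGen.toU r s g) * ρ (UGen.toU r s g') = 1 := by
    intro g g' hrel
    have h1 : UGen.toU r s g * UGen.toU r s g' = 1 := by
      unfold UGen.toU
      rw [← map_mul, RingQuot.mkAlgHom_rel 𝕂 hrel, map_one]
    rw [← map_mul, h1, map_one]
  have hwinv : ∀ j : ℕ,
      ρ (UGen.toU r s .winv) (v j) = (φ * (r * s⁻¹) ^ (-(j : ℤ)))⁻¹ • v j := by
    intro j
    have h2 : ρ (UGen.toU r s .winv) (ρ (UGen.toU r s .w) (v j)) = v j := by
      rw [← Module.End.mul_apply, hrelmul .winv .w URel.winv_left, Module.End.one_apply]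
    rw [hw, map_smul] at h2
    calc ρ (UGen.toU r s .winv) (v j)
        = (φ * (r * s⁻¹) ^ (-(j : ℤ)))⁻¹ •
            ((φ * (r * s⁻¹) ^ (-(j : ℤ))) • ρ (UGen.toU r s .winv) (v j)) := by
          rw [smul_smul, inv_mul_cancel₀ (hlam j), one_smul]
      _ = (φ * (r * s⁻¹) ^ (-(j : ℤ)))⁻¹ • v j := by rw [h2]
  have hw'inv : ∀ j : ℕ,
      ρ (UGen.toU r s .w'inv) (v j) = (φ' * (r * s⁻¹) ^ ((j : ℤ)))⁻¹ • v j := by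
    intro j
    have h2 : ρ (UGen.toU r s .w'inv) (ρ (UGen.toU r s .w') (v j)) = v j := by
      rw [← Module.End.mul_apply, hrelmul .w'inv .w' URel.w'inv_left, Module.End.one_apply]
    rw [hw', map_smul] at h2
    calc ρ (UGen.toU r s .w'inv) (v j)
        = (φ' * (r * s⁻¹) ^ ((j : ℤ)))⁻¹ •
            ((φ' * (r * s⁻¹) ^ ((j : ℤ))) • ρ (UGen.toU r s .w'inv) (v j)) := by
          rw [smul_smul, inv_mul_cancel₀ (hlam' j), one_smul]
      _ = (φ' * (r * s⁻¹) ^ ((j : ℤ)))⁻¹ • v j := by rw [h2]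
  constructor
  · -- simple → condition
    intro hsimp
    by_contra hc
    push_neg at hc
    obtain ⟨j₀, hj₀⟩ := hc
    have hvP : ∀ k, j₀ < k → v k ∈ Submodule.span 𝕂 (v '' {k | j₀ < k}) := fun k hk =>
      Submodule.subset_span ⟨k, hk, rfl⟩
    set P : Submodule 𝕂 M := Submodule.span 𝕂 (v '' {k | j₀ < k}) with hPdef
    have hgen : ∀ g : UGen, ∀ m ∈ P, ρ (UGen.toU r s g) m ∈ P := by
      intro g m hm
      induction hm using Submodule.span_induction with
      | mem x hx =>
          obtain ⟨k, hk, rfl⟩ := hx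
          have hk' : j₀ < k := hk
          cases g with
          | e =>
              obtain ⟨j, rfl⟩ : ∃ j, k = j + 1 := ⟨k - 1, by omega⟩
              rw [he j]
              rcases eq_or_lt_of_le (Nat.lt_succ_iff.mp hk') with hj | hj
              · have hnum : r ^ (-(j : ℤ)) * φ - s ^ (-(j : ℤ)) * φ' = 0 := by
                  rw [mul_comm, mul_comm (s ^ (-(j : ℤ)))]
                  rw [← hj]
                  exact hj₀
                rw [hnum, zero_div, zero_smul]
                exact P.zero_mem
              · exact P.smul_mem _ (hvP j hj)
          | f => rw [hf]; exact P.smul_mem _ (hvP _ (by omega))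
          | w => rw [hw]; exact P.smul_mem _ (hvP _ hk')
          | winv => rw [hwinv]; exact P.smul_mem _ (hvP _ hk')
          | w' => rw [hw']; exact P.smul_mem _ (hvP _ hk')
          | w'inv => rw [hw'inv]; exact P.smul_mem _ (hvP _ hk')
      | zero => rw [map_zero]; exact P.zero_mem
      | add x y _ _ hx hy => rw [map_add]; exact P.add_mem hx hy
      | smul c x _ hx => rw [map_smul]; exact P.smul_mem c hx
    let N : Submodule (Ursl2 𝕂 r s) M :=
      { carrier := P
        add_mem' := fun h1 h2 => P.add_mem h1 h2
        zero_mem' := P.zero_mem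
        smul_mem' := fun a m hm => ursl2_act_mem ρ P hgen a m hm }
    rcases hsimp.eq_bot_or_eq_top N with hN | hN
    · have h1 : v (j₀ + 1) ∈ N := hvP _ (Nat.lt_succ_self j₀)
      rw [hN] at h1
      exact v.ne_zero (j₀ + 1) ((Submodule.mem_bot _).mp h1)
    · have h1 : v 0 ∈ N := hN ▸ Submodule.mem_top
      have h2 : v 0 ∈ Submodule.span 𝕂 (v '' {k | j₀ < k}) := h1
      exact v.linearIndependent.notMem_span_image (by simp) h2
  · -- condition → simple
    intro hcond
    have hμ : ∀ j : ℕ, (r ^ (-(j : ℤ)) * φ - s ^ (-(j : ℤ)) * φ') / (r - s) ≠ 0 := by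
      intro j
      apply div_ne_zero _ hrssub
      rw [mul_comm, mul_comm (s ^ (-(j : ℤ)))]
      exact hcond j
    have hbotne : (⊥ : Submodule (Ursl2 𝕂 r s) M) ≠ ⊤ := by
      intro h
      have h1 : v 0 ∈ (⊥ : Submodule (Ursl2 𝕂 r s) M) := h ▸ Submodule.mem_top
      exact v.ne_zero 0 ((Submodule.mem_bot _).mp h1)
    haveI : Nontrivial (Submodule (Ursl2 𝕂 r s) M) := ⟨⟨⊥, ⊤, hbotne⟩⟩
    suffices IsSimpleOrder (Submodule (Ursl2 𝕂 r s) M) from ⟨⟩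
    refine ⟨fun N => ?_⟩
    by_cases hN : N = ⊥
    · exact Or.inl hN
    right
    obtain ⟨x, hxN, hx0⟩ := Submodule.exists_mem_ne_zero_of_ne_bot hN
    -- find a basis vector in N
    have key : ∀ n : ℕ, ∀ x : M, x ∈ N → x ≠ 0 → (v.repr x).support.card ≤ n →
        ∃ j, v j ∈ N := by
      intro n
      induction n with
      | zero =>
          intro x hxN hx0 hcard
          exfalso
          apply hx0
          have h1 : (v.repr x).support = ∅ := Finset.card_eq_zero.mp (Nat.le_zero.mp hcard)
          have h2 : v.repr x = 0 := Finsupp.support_eq_empty.mp h1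
          exact (LinearEquiv.map_eq_zero_iff v.repr).mp h2
      | succ n ih =>
          intro x hxN hx0 hcard
          have hne : (v.repr x).support.Nonempty :=
            Finsupp.support_nonempty_iff.mpr ((LinearEquiv.map_ne_zero_iff v.repr).mpr hx0)
          obtain ⟨k, hk⟩ := hne
          have hck : v.repr x k ≠ 0 := Finsupp.mem_support_iff.mp hk
          have hyN : ρ (UGen.toU r s .w) x - (φ * (r * s⁻¹) ^ (-(k : ℤ))) • x ∈ N := by
            apply N.sub_mem
            · rw [← hsmul]; exact N.smul_mem _ hxN
            · exact hKmem N _ _ hxN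
          have hrepr : ∀ i, v.repr (ρ (UGen.toU r s .w) x -
              (φ * (r * s⁻¹) ^ (-(k : ℤ))) • x) i =
              (φ * (r * s⁻¹) ^ (-(i : ℤ)) - φ * (r * s⁻¹) ^ (-(k : ℤ))) * v.repr x i := by
            intro i
            rw [map_sub, map_smul, Finsupp.sub_apply, Finsupp.smul_apply,
              diag_repr_aux v (ρ (UGen.toU r s .w)) (fun j => φ * (r * s⁻¹) ^ (-(j : ℤ)))
                hw x i, smul_eq_mul, sub_mul]
          by_cases hy0 : ρ (UGen.toU r s .w) x - (φ * (r * s⁻¹) ^ (-(k : ℤ))) • x = 0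
          · -- x is concentrated at k
            have hsupp : ∀ i, i ≠ k → v.repr x i = 0 := by
              intro i hik
              have h0 : (φ * (r * s⁻¹) ^ (-(i : ℤ)) - φ * (r * s⁻¹) ^ (-(k : ℤ))) *
                  v.repr x i = 0 := by
                rw [← hrepr i, hy0, map_zero, Finsupp.zero_apply]
              rcases mul_eq_zero.mp h0 with h | h
              · exact absurd (hlaminj i k (sub_eq_zero.mp h)) hik
              · exact h
            have hxk : x = v.repr x k • v k := by
              apply v.repr.injective
              ext i
              by_cases hik : i = k
              · subst hik; simp [Module.Basis.repr_self]
              · simp [Module.Basis.repr_self, Finsupp.single_apply, Ne.symm hik, hsupp i hik]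
            obtain ⟨c, hc0, hxc⟩ : ∃ c : 𝕂, c ≠ 0 ∧ x = c • v k := ⟨v.repr x k, hck, hxk⟩
            have h2 := hKmem N c⁻¹ x hxN
            rw [hxc, smul_smul, inv_mul_cancel₀ hc0, one_smul] at h2
            exact ⟨k, h2⟩
          · apply ih _ hyN hy0
            have hsub : (v.repr (ρ (UGen.toU r s .w) x -
                (φ * (r * s⁻¹) ^ (-(k : ℤ))) • x)).support ⊆ (v.repr x).support.erase k := by
              intro i hi
              rw [Finset.mem_erase]
              have hyi := Finsupp.mem_support_iff.mp hi
              rw [hrepr i] at hyi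
              constructor
              · rintro rfl; exact hyi (by rw [sub_self, zero_mul])
              · exact Finsupp.mem_support_iff.mpr fun h => hyi (by rw [h, mul_zero])
            calc (v.repr (ρ (UGen.toU r s .w) x -
                (φ * (r * s⁻¹) ^ (-(k : ℤ))) • x)).support.card
                ≤ ((v.repr x).support.erase k).card := Finset.card_le_card hsub
              _ ≤ n := by
                  have h3 := Finset.card_erase_of_mem hk
                  omega
    obtain ⟨j, hj⟩ := key _ x hxN hx0 le_rfl
    have down : ∀ j : ℕ, v j ∈ N → v 0 ∈ N := by
      intro j
      induction j with
      | zero => exact id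
      | succ j ihj =>
          intro hjN
          apply ihj
          have h1 : ρ (UGen.toU r s .e) (v (j + 1)) ∈ N := by
            rw [← hsmul]; exact N.smul_mem _ hjN
          rw [he j] at h1
          have h2 := hKmem N ((r ^ (-(j : ℤ)) * φ - s ^ (-(j : ℤ)) * φ') / (r - s))⁻¹ _ h1
          rw [smul_smul, inv_mul_cancel₀ (hμ j), one_smul] at h2
          exact h2
    have hv0 : v 0 ∈ N := down j hj
    have up : ∀ k : ℕ, v k ∈ N := by
      intro k
      induction k with
      | zero => exact hv0
      | succ k ihk =>
          have h1 : ρ (UGen.toU r s .f) (v k) ∈ N := by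
            rw [← hsmul]; exact N.smul_mem _ ihk
          rw [hf k] at h1
          have h2 := hKmem N (qInt r s (k + 1))⁻¹ _ h1
          rw [smul_smul, inv_mul_cancel₀ (hq k), one_smul] at h2
          exact h2
    rw [eq_top_iff]
    intro m _
    rw [← v.linearCombination_repr m, Finsupp.linearCombination_apply, Finsupp.sum]
    exact Submodule.sum_mem N fun i _ => hKmem N _ _ (up i)
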